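/- arXiv:2111.09588 — 2 statements merged into one kernel-verified Lean document; each statement's English description precedes it below -/
import Mathlib

section
/- Let P be a finite connected flat poset (height one) and C = {a,b,v,w} a 4-crown contained in P. Then C is a retract of P. -/
def ConnectedPoset (α : Type*) [PartialOrder α] : Prop :=
  ∀ a b : α, Relation.ReflTransGen (fun u v : α => u ≤ v ∨ v ≤ u) a b

/-- A poset is flat iff it has height one. -/
def IsFlatPoset (α : Type*) [PartialOrder α] : Prop :=
  (∀ z : α, IsMin z ∨ IsMax z) ∧ ∃ u v : α, u < v

/-- `{a,b,v,w}` is a 4-crown: exactly the strict comparabilities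
`a<v, a<w, b<v, b<w`. -/
def Is4Crown {α : Type*} [PartialOrder α] (a b v w : α) : Prop :=
  a < v ∧ a < w ∧ b < v ∧ b < w ∧ ¬ a ≤ b ∧ ¬ b ≤ a ∧ ¬ v ≤ w ∧ ¬ w ≤ v

/-- a 4-crown contained in a finite connected flat poset is a
retract. -/
theorem stmt10 {α : Type*} [PartialOrder α] [Fintype α]
    (hconn : ConnectedPoset α) (hflat : IsFlatPoset α)
    (a b v w : α) (hcrown : Is4Crown a b v w) :
    ∃ r : α → α, Monotone r ∧ (∀ z, r (r z) = r z) ∧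
      Set.range r = ({a, b, v, w} : Set α) := by
  classical
  obtain ⟨hav, haw, hbv, hbw, hab, hba, hvw, hwv⟩ := hcrown
  obtain ⟨hflat1, -⟩ := hflat
  set r : α → α := fun z =>
    if z = b then b else if z = w then w else if IsMin z then a else v with hr
  have hamin : IsMin a := (hflat1 a).resolve_right
    (fun h => hav.not_ge (h hav.le))
  have hbmin : IsMin b := (hflat1 b).resolve_right
    (fun h => hbv.not_ge (h hbv.le))
  have hvnmin : ¬ IsMin v := fun h => hav.not_ge (h hav.le)
  have hwnmin : ¬ IsMin w := fun h => haw.not_ge (h haw.le)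
  have ha : r a = a := by
    have h1 : a ≠ b := fun h => hab (h ▸ le_refl a)
    have h2 : a ≠ w := haw.ne
    simp [hr, h1, h2, hamin]
  have hb : r b = b := by simp [hr]
  have hv : r v = v := by
    have h1 : v ≠ b := hbv.ne'
    have h2 : v ≠ w := fun h => hvw (h ▸ le_refl v)
    simp [hr, h1, h2, hvnmin]
  have hw : r w = w := by
    have h1 : w ≠ b := hbw.ne'
    simp [hr, h1]
  have hcases : ∀ z, r z = a ∨ r z = b ∨ r z = v ∨ r z = w := by
    intro z
    simp only [hr]
    split_ifs <;> simp
  refine ⟨r, ?_, ?_, ?_⟩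
  · intro x y hxy
    rcases eq_or_lt_of_le hxy with rfl | hlt
    · exact le_refl _
    · have hxmin : IsMin x := (hflat1 x).resolve_right
        (fun h => hlt.not_ge (h hlt.le))
      have hynmin : ¬ IsMin y := fun h => hlt.not_ge (h hlt.le)
      have hrx : r x = a ∨ r x = b := by
        by_cases hxb : x = b
        · right; simp [hr, hxb]
        · left
          have hxw : x ≠ w := by rintro rfl; exact hwnmin hxmin
          simp [hr, hxb, hxw, hxmin]
      have hry : r y = v ∨ r y = w := by
        have hyb : y ≠ b := by rintro rfl; exact hynmin hbmin
        by_cases hyw : y = w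
        · right; rw [hyw, hw]
        · left; simp [hr, hyb, hyw, hynmin]
      rcases hrx with h1 | h1 <;> rcases hry with h2 | h2 <;>
        rw [h1, h2]
      · exact hav.le
      · exact haw.le
      · exact hbv.le
      · exact hbw.le
  · intro z
    rcases hcases z with h | h | h | h <;> rw [h]
    exacts [ha, hb, hv, hw]
  · ext z
    constructor
    · rintro ⟨y, rfl⟩
      rcases hcases y with h | h | h | h <;> rw [h] <;> simp
    · intro hz
      simp only [Set.mem_insert_iff, Set.mem_singleton_iff] at hz
      rcases hz with h | h | h | h
      · exact ⟨a, by rw [ha, h]⟩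
      · exact ⟨b, by rw [hb, h]⟩
      · exact ⟨v, by rw [hv, h]⟩
      · exact ⟨w, by rw [hw, h]⟩
end

section
/- Let P be a finite connected flat poset, C an n-crown in P, and x, y ∈ C with x <_P y. Suppose C has minimal size among crowns of P containing both x and y (every crown containing x and y has at least n points). Let P⁻ be the poset obtained from P by deleting the single relation (x,y), and for z ∈ P let d(z) be the least length of a fence in P⁻ containing both x and z. Then the map r : P → C defined by r(z) = the unique c ∈ C with d(c) = d(z) if d(z) ≤ n, and r(z) = y otherwise, is a retraction of P onto C. -/
/-- Comparability of two (distinct) points. -/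
def Comp {α : Type*} [PartialOrder α] (x y : α) : Prop := x ≠ y ∧ (x ≤ y ∨ y ≤ x)

/-- `S` is a crown: at least 4 points and its comparability graph is a cycle
(2-regular and connected). -/
def IsCrown {α : Type*} [PartialOrder α] (S : Set α) : Prop :=
  4 ≤ S.ncard ∧
  (∀ x ∈ S, {y | y ∈ S ∧ Comp x y}.ncard = 2) ∧
  ∀ x ∈ S, ∀ y ∈ S,
    Relation.ReflTransGen (fun u v : α => u ∈ S ∧ v ∈ S ∧ Comp u v) x y

/-- The order relation of `P⁻ = (X, ≤_P ∖ {(x,y)})`. -/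
def Rminus {α : Type*} [PartialOrder α] (x y : α) (u v : α) : Prop :=
  u ≤ v ∧ ¬ (u = x ∧ v = y)

/-- Comparability with respect to an arbitrary order relation `R`. -/
def CompR {α : Type*} (R : α → α → Prop) (u v : α) : Prop :=
  u ≠ v ∧ (R u v ∨ R v u)

/-- `f : Fin (k+1) → α` enumerates a fence of length `k` for the relation `R`:
its points are distinct, consecutive points are comparable, and non-consecutive
points are incomparable (the comparability graph is a path). -/
def IsFenceSeq {α : Type*} (R : α → α → Prop) (k : ℕ) (f : Fin (k + 1) → α) : Prop :=
  Function.Injective f ∧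
  (∀ i : Fin k, CompR R (f i.castSucc) (f i.succ)) ∧
  (∀ i j : Fin (k + 1), (i : ℕ) + 1 < (j : ℕ) → ¬ CompR R (f i) (f j))

section Aux
variable {α : Type*}

lemma compR_symm {R : α → α → Prop} {u v : α} (h : CompR R u v) : CompR R v u :=
  ⟨h.1.symm, h.2.symm⟩

lemma fence_consec {R : α → α → Prop} {k : ℕ} {f : Fin (k+1) → α}
    (hf : IsFenceSeq R k f) {i : ℕ} (h : i < k) :
    CompR R (f ⟨i, by omega⟩) (f ⟨i+1, by omega⟩) := by
  have := hf.2.1 ⟨i, h⟩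
  simpa [Fin.castSucc, Fin.succ, Fin.castAdd, Fin.castLE] using this

lemma fence_chord {R : α → α → Prop} {k : ℕ} {f : Fin (k+1) → α}
    (hf : IsFenceSeq R k f) {i j : ℕ} (hij : i + 1 < j) (hj : j < k + 1) :
    ¬ CompR R (f ⟨i, by omega⟩) (f ⟨j, hj⟩) :=
  hf.2.2 ⟨i, by omega⟩ ⟨j, hj⟩ (by simpa)

/-- reversal of a fence -/
lemma fence_rev {R : α → α → Prop} {k : ℕ} {f : Fin (k+1) → α}
    (hf : IsFenceSeq R k f) :
    IsFenceSeq R k (fun i : Fin (k+1) => f ⟨k - (i : ℕ), by omega⟩) := by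
  refine ⟨?_, ?_, ?_⟩
  · intro a b hab
    simp only at hab
    have := hf.1 hab
    have h1 : k - (a : ℕ) = k - (b : ℕ) := congrArg Fin.val this
    have ha := a.isLt; have hb := b.isLt
    exact Fin.ext (by omega)
  · intro i
    have hi := i.isLt
    have h1 : ((i.castSucc : Fin (k+1)) : ℕ) = (i : ℕ) := rfl
    have h2 : ((i.succ : Fin (k+1)) : ℕ) = (i : ℕ) + 1 := rfl
    simp only [h1, h2]
    have hc := fence_consec hf (i := k - (i : ℕ) - 1) (by omega)
    have e1 : (⟨k - (i:ℕ) - 1, by omega⟩ : Fin (k+1)) = ⟨k - ((i:ℕ)+1), by omega⟩ := by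
      apply Fin.ext; simp; omega
    have e2 : (⟨k - (i:ℕ) - 1 + 1, by omega⟩ : Fin (k+1)) = ⟨k - (i:ℕ), by omega⟩ := by
      apply Fin.ext; simp; omega
    rw [e1, e2] at hc
    exact compR_symm hc
  · intro i j hij hcomp
    have hi := i.isLt; have hj := j.isLt
    have := fence_chord hf (i := k - (j:ℕ)) (j := k - (i:ℕ)) (by omega) (by omega)
    exact this (compR_symm hcomp)

/-- window of a fence -/
lemma fence_window {R : α → α → Prop} {k : ℕ} {f : Fin (k+1) → α}
    (hf : IsFenceSeq R k f) (a b : ℕ) (hab : a ≤ b) (hb : b < k + 1) :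
    IsFenceSeq R (b - a) (fun i : Fin (b - a + 1) => f ⟨a + (i : ℕ), by omega⟩) := by
  refine ⟨?_, ?_, ?_⟩
  · intro p q hpq
    simp only at hpq
    have := congrArg Fin.val (hf.1 hpq)
    exact Fin.ext (by simpa using this)
  · intro i
    have hi := i.isLt
    have hc := fence_consec hf (i := a + (i : ℕ)) (by omega)
    have h2 : ((i.succ : Fin (b - a + 1)) : ℕ) = (i : ℕ) + 1 := rfl
    have h1 : ((i.castSucc : Fin (b - a + 1)) : ℕ) = (i : ℕ) := rfl
    simp only [h1, h2]
    exact hc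
  · intro i j hij hcomp
    have hi := i.isLt; have hj := j.isLt
    exact fence_chord hf (i := a + (i:ℕ)) (j := a + (j:ℕ)) (by omega) (by omega) hcomp

end Aux

section Dlem
variable {α : Type*} [PartialOrder α] {x y : α} {d : α → ℕ}
variable (hd : ∀ z : α, IsLeast {k : ℕ | ∃ f : Fin (k + 1) → α,
      IsFenceSeq (Rminus x y) k f ∧ x ∈ Set.range f ∧ z ∈ Set.range f} (d z))

include hd

lemma d_le {z : α} {k : ℕ} {f : Fin (k+1) → α} (hf : IsFenceSeq (Rminus x y) k f)
    (hxm : x ∈ Set.range f) (hzm : z ∈ Set.range f) : d z ≤ k :=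
  (hd z).2 ⟨f, hf, hxm, hzm⟩

lemma d_self : d x = 0 := by
  have : d x ≤ 0 := d_le hd (z := x) (k := 0) (f := fun _ => x)
    ⟨fun a b _ => Fin.ext (by omega), fun i => absurd i.isLt (by omega),
      fun i j hij _ => by have := i.isLt; have := j.isLt; omega⟩ ⟨0, rfl⟩ ⟨0, rfl⟩
  omega

lemma exists_realizer (z : α) : ∃ f : Fin (d z + 1) → α,
    IsFenceSeq (Rminus x y) (d z) f ∧ f 0 = x ∧ f (Fin.last (d z)) = z := by
  obtain ⟨f, hf, ⟨a, ha⟩, ⟨b, hb⟩⟩ := (hd z).1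
  have ha' := a.isLt; have hb' := b.isLt
  rcases le_or_gt (a : ℕ) (b : ℕ) with hab | hab
  · -- window from a to b
    have hw := fence_window hf (a : ℕ) (b : ℕ) hab b.isLt
    have hxw : x ∈ Set.range (fun i : Fin ((b:ℕ) - (a:ℕ) + 1) => f ⟨(a:ℕ) + (i:ℕ), by omega⟩) := by
      refine ⟨⟨0, by omega⟩, ?_⟩
      have e : (⟨(a:ℕ) + ((⟨0, by omega⟩ : Fin ((b:ℕ) - (a:ℕ) + 1)):ℕ), by omega⟩ : Fin (d z + 1)) = a :=
        Fin.ext (by simp)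
      simp only [e, ha]
    have hzw : z ∈ Set.range (fun i : Fin ((b:ℕ) - (a:ℕ) + 1) => f ⟨(a:ℕ) + (i:ℕ), by omega⟩) := by
      refine ⟨⟨(b:ℕ) - (a:ℕ), by omega⟩, ?_⟩
      have e : (⟨(a:ℕ) + (((⟨(b:ℕ) - (a:ℕ), by omega⟩ : Fin ((b:ℕ) - (a:ℕ) + 1))):ℕ), by omega⟩ : Fin (d z + 1)) = b :=
        Fin.ext (by simp; omega)
      simp only [e, hb]
    have hle : d z ≤ (b:ℕ) - (a:ℕ) := d_le hd hw hxw hzw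
    have ha0 : a = (0 : Fin (d z + 1)) := Fin.ext (by rw [Fin.val_zero]; omega)
    have hb0 : b = Fin.last (d z) := Fin.ext (by simp [Fin.last]; omega)
    rw [ha0] at ha; rw [hb0] at hb
    exact ⟨f, hf, ha, hb⟩
  · -- use reversed fence
    have hgf := fence_rev hf
    set g : Fin (d z + 1) → α := fun i : Fin (d z + 1) => f ⟨d z - (i:ℕ), by omega⟩ with hg
    have hxw : x ∈ Set.range g := ⟨⟨d z - (a:ℕ), by omega⟩, by
      simp only [hg]
      have e : (⟨d z - ((⟨d z - (a:ℕ), by omega⟩ : Fin (d z + 1)):ℕ), by omega⟩ : Fin (d z + 1)) = a :=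
        Fin.ext (by simp; omega)
      simp only [e, ha]⟩
    have hzw : z ∈ Set.range g := ⟨⟨d z - (b:ℕ), by omega⟩, by
      simp only [hg]
      have e : (⟨d z - ((⟨d z - (b:ℕ), by omega⟩ : Fin (d z + 1)):ℕ), by omega⟩ : Fin (d z + 1)) = b :=
        Fin.ext (by simp; omega)
      simp only [e, hb]⟩
    have hw := fence_window hgf (d z - (a:ℕ)) (d z - (b:ℕ)) (by omega) (by omega)
    have hxw2 : x ∈ Set.range (fun i : Fin ((d z - (b:ℕ)) - (d z - (a:ℕ)) + 1) =>
        g ⟨(d z - (a:ℕ)) + (i:ℕ), by omega⟩) := by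
      refine ⟨⟨0, by omega⟩, ?_⟩
      simp only [hg]
      have e : (⟨d z - (((⟨(d z - (a:ℕ)) + ((⟨0, by omega⟩ : Fin ((d z - (b:ℕ)) - (d z - (a:ℕ)) + 1)):ℕ), by omega⟩ : Fin (d z + 1))):ℕ), by omega⟩ : Fin (d z + 1)) = a :=
        Fin.ext (by simp; omega)
      simp only [e, ha]
    have hzw2 : z ∈ Set.range (fun i : Fin ((d z - (b:ℕ)) - (d z - (a:ℕ)) + 1) =>
        g ⟨(d z - (a:ℕ)) + (i:ℕ), by omega⟩) := by
      refine ⟨⟨(d z - (b:ℕ)) - (d z - (a:ℕ)), by omega⟩, ?_⟩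
      simp only [hg]
      have e : (⟨d z - (((⟨(d z - (a:ℕ)) + ((⟨(d z - (b:ℕ)) - (d z - (a:ℕ)), by omega⟩ : Fin ((d z - (b:ℕ)) - (d z - (a:ℕ)) + 1)):ℕ), by omega⟩ : Fin (d z + 1))):ℕ), by omega⟩ : Fin (d z + 1)) = b :=
        Fin.ext (by simp; omega)
      simp only [e, hb]
    have hle : d z ≤ (d z - (b:ℕ)) - (d z - (a:ℕ)) := d_le hd hw hxw2 hzw2
    have hkey : (a:ℕ) = d z ∧ (b:ℕ) = 0 := by omega
    refine ⟨g, hgf, ?_, ?_⟩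
    · have e : (⟨d z - (((0 : Fin (d z + 1))):ℕ), by omega⟩ : Fin (d z + 1)) = a :=
        Fin.ext (by simp [hkey.1])
      simp only [hg, e, ha]
    · have e : (⟨d z - ((Fin.last (d z)):ℕ), by omega⟩ : Fin (d z + 1)) = b :=
        Fin.ext (by simp [Fin.last, hkey.2])
      simp only [hg, e, hb]

lemma d_eq_zero {z : α} (h : d z = 0) : z = x := by
  obtain ⟨f, hf, h0, hl⟩ := exists_realizer hd z
  have : (0 : Fin (d z + 1)) = Fin.last (d z) := Fin.ext (by simp [h, Fin.last])
  rw [← hl, ← this, h0]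

set_option maxHeartbeats 1600000 in
lemma d_step {u v : α} (h : CompR (Rminus x y) u v) : d v ≤ d u + 1 := by
  obtain ⟨f, hf, h0, hl⟩ := exists_realizer hd u
  by_cases hv : v ∈ Set.range f
  · obtain ⟨b, hb⟩ := hv
    have hb' := b.isLt
    have hw := fence_window hf 0 (b:ℕ) (by omega) b.isLt
    have hle : d v ≤ (b:ℕ) - 0 := by
      refine d_le hd hw ⟨⟨0, by omega⟩, ?_⟩ ⟨⟨(b:ℕ) - 0, by omega⟩, ?_⟩
      · have e : (⟨0 + ((⟨0, by omega⟩ : Fin ((b:ℕ) - 0 + 1)):ℕ), by omega⟩ : Fin (d u + 1)) = 0 :=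
          Fin.ext (by simp)
        simp only [e, h0]
      · have e : (⟨0 + ((⟨(b:ℕ) - 0, by omega⟩ : Fin ((b:ℕ) - 0 + 1)):ℕ), by omega⟩ : Fin (d u + 1)) = b :=
          Fin.ext (by simp)
        simp only [e, hb]
    omega
  · -- v not on fence; take least index comparable to v
    have hP : ∃ j, ∃ (hj : j < d u + 1), CompR (Rminus x y) (f ⟨j, hj⟩) v := by
      refine ⟨d u, by omega, ?_⟩
      have e : (⟨d u, by omega⟩ : Fin (d u + 1)) = Fin.last (d u) := rfl
      rw [e, hl]; exact h
    classical
    obtain ⟨i, ⟨hilt, hicomp⟩, hmin0⟩ : ∃ i, (∃ (hj : i < d u + 1),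
        CompR (Rminus x y) (f ⟨i, hj⟩) v) ∧ ∀ m, m < i →
        ¬ ∃ (hm : m < d u + 1), CompR (Rminus x y) (f ⟨m, hm⟩) v :=
      ⟨Nat.find hP, Nat.find_spec hP, fun m hm => Nat.find_min hP hm⟩
    set g : Fin (i + 1 + 1) → α := fun t => if ht : (t:ℕ) < i + 1 then f ⟨(t:ℕ), by omega⟩ else v
      with hg
    have gdef1 : ∀ (j:ℕ) (hj1 : j < i + 1) (hj2 : j < i + 2), g ⟨j, hj2⟩ = f ⟨j, by omega⟩ := by
      intro j hj1 hj2; simp only [hg]; rw [dif_pos hj1]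
    have gdef2 : ∀ (j:ℕ) (hj1 : ¬ (j < i + 1)) (hj2 : j < i + 2), g ⟨j, hj2⟩ = v := by
      intro j hj1 hj2; simp only [hg]; rw [dif_neg hj1]
    have hgfence : IsFenceSeq (Rminus x y) (i+1) g := by
      refine ⟨?_, ?_, ?_⟩
      · intro p q hpq
        have hp := p.isLt; have hq := q.isLt
        have ep : p = (⟨(p:ℕ), hp⟩ : Fin (i+2)) := Fin.ext rfl
        have eq' : q = (⟨(q:ℕ), hq⟩ : Fin (i+2)) := Fin.ext rfl
        rw [ep, eq'] at hpq
        by_cases h1 : (p:ℕ) < i + 1 <;> by_cases h2 : (q:ℕ) < i + 1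
        · rw [gdef1 _ h1, gdef1 _ h2] at hpq
          have := congrArg Fin.val (hf.1 hpq)
          exact Fin.ext (by simpa using this)
        · rw [gdef1 _ h1, gdef2 _ h2] at hpq; exact absurd ⟨_, hpq⟩ hv
        · rw [gdef2 _ h1, gdef1 _ h2] at hpq; exact absurd ⟨_, hpq.symm⟩ hv
        · exact Fin.ext (by omega)
      · intro t
        have ht := t.isLt
        have ec : t.castSucc = (⟨(t:ℕ), by omega⟩ : Fin (i+2)) := Fin.ext rfl
        have es : t.succ = (⟨(t:ℕ)+1, by omega⟩ : Fin (i+2)) := Fin.ext rfl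
        rw [ec, es]
        by_cases h1 : (t:ℕ) + 1 < i + 1
        · rw [gdef1 _ (by omega), gdef1 _ h1]
          exact fence_consec hf (by omega)
        · -- t = i
          have hti : (t:ℕ) = i := by omega
          rw [gdef1 _ (by omega), gdef2 _ (by omega)]
          have e : (⟨(t:ℕ), by omega⟩ : Fin (d u + 1)) = ⟨i, hilt⟩ := Fin.ext hti
          rw [e]; exact hicomp
      · intro p q hpq hcomp
        have hp := p.isLt; have hq := q.isLt
        have ep : p = (⟨(p:ℕ), hp⟩ : Fin (i+2)) := Fin.ext rfl
        have eq' : q = (⟨(q:ℕ), hq⟩ : Fin (i+2)) := Fin.ext rfl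
        rw [ep, eq'] at hcomp
        by_cases h2 : (q:ℕ) < i + 1
        · rw [gdef1 _ (by omega), gdef1 _ h2] at hcomp
          exact fence_chord hf (i := (p:ℕ)) (j := (q:ℕ)) hpq (by omega) hcomp
        · rw [gdef1 _ (by omega), gdef2 _ h2] at hcomp
          have hmin := hmin0 (p:ℕ) (by omega)
          push_neg at hmin
          exact hmin (by omega) hcomp
    have : d v ≤ i + 1 := by
      refine d_le hd hgfence ⟨⟨0, by omega⟩, ?_⟩ ⟨Fin.last _, ?_⟩
      · rw [gdef1 _ (by omega)]
        have e : (⟨0, by omega⟩ : Fin (d u + 1)) = 0 := rfl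
        rw [e, h0]
      · have el : Fin.last (i+1) = (⟨i+1, by omega⟩ : Fin (i+2)) := rfl
        rw [el, gdef2 _ (by omega)]
    omega

end Dlem

section Flat
variable {α : Type*} [PartialOrder α]

lemma compR_ne_comp {x y u v : α} (h : CompR (Rminus x y) u v) :
    u ≠ v ∧ (u ≤ v ∨ v ≤ u) := by
  obtain ⟨hne, h2 | h2⟩ := h
  · exact ⟨hne, Or.inl h2.1⟩
  · exact ⟨hne, Or.inr h2.1⟩

lemma not_min_and_max (hconn : ConnectedPoset α) (hflat : IsFlatPoset α) (z : α) :
    ¬ (IsMin z ∧ IsMax z) := by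
  rintro ⟨hmin, hmax⟩
  obtain ⟨u, v, huv⟩ := hflat.2
  have key : ∀ w, Relation.ReflTransGen (fun a b : α => a ≤ b ∨ b ≤ a) z w → w = z := by
    intro w hw
    induction hw with
    | refl => rfl
    | tail h1 h2 ih =>
      subst ih
      rcases h2 with h2 | h2
      · exact le_antisymm (hmax h2) h2
      · exact le_antisymm h2 (hmin h2)
  have hu := key u (hconn z u)
  have hv := key v (hconn z v)
  exact absurd (hu.trans hv.symm) (ne_of_lt huv)

lemma min_lt_of_comp (hflat : IsFlatPoset α) {u v : α} (hmin : IsMin u)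
    (hne : u ≠ v) (hc : u ≤ v ∨ v ≤ u) : u < v ∧ IsMax v := by
  have hlt : u < v := by
    rcases hc with h | h
    · exact lt_of_le_of_ne h hne
    · exact absurd (le_antisymm h (hmin h)) (Ne.symm hne)
  refine ⟨hlt, ?_⟩
  rcases hflat.1 v with h | h
  · exact absurd (le_antisymm (h hlt.le) hlt.le) (Ne.symm hne)
  · exact h

lemma max_gt_of_comp (hflat : IsFlatPoset α) {u v : α} (hmax : IsMax u)
    (hne : u ≠ v) (hc : u ≤ v ∨ v ≤ u) : v < u ∧ IsMin v := by
  have hlt : v < u := by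
    rcases hc with h | h
    · exact absurd (le_antisymm h (hmax h)) hne
    · exact lt_of_le_of_ne h (Ne.symm hne)
  refine ⟨hlt, ?_⟩
  rcases hflat.1 v with h | h
  · exact h
  · exact absurd (le_antisymm hlt.le (h hlt.le)) (Ne.symm hne)

lemma x_isMin (hflat : IsFlatPoset α) {x y : α} (hxy : x < y) : IsMin x := by
  rcases hflat.1 x with h | h
  · exact h
  · exact absurd (le_antisymm hxy.le (h hxy.le)) (ne_of_lt hxy)

lemma y_isMax (hflat : IsFlatPoset α) {x y : α} (hxy : x < y) : IsMax y := by
  rcases hflat.1 y with h | h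
  · exact absurd (le_antisymm hxy.le (h hxy.le)) (ne_of_lt hxy)
  · exact h

variable {x y : α} {d : α → ℕ}
variable (hd : ∀ z : α, IsLeast {k : ℕ | ∃ f : Fin (k + 1) → α,
      IsFenceSeq (Rminus x y) k f ∧ x ∈ Set.range f ∧ z ∈ Set.range f} (d z))

include hd

lemma d_parity (hflat : IsFlatPoset α) (hxy : x < y) (z : α) :
    (Even (d z) → IsMin z) ∧ (¬ Even (d z) → IsMax z) := by
  obtain ⟨f, hf, h0, hl⟩ := exists_realizer hd z
  have key : ∀ j (hj : j < d z + 1),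
      (Even j → IsMin (f ⟨j, hj⟩)) ∧ (¬ Even j → IsMax (f ⟨j, hj⟩)) := by
    intro j
    induction j with
    | zero =>
      intro hj
      have e : (⟨0, hj⟩ : Fin (d z + 1)) = 0 := rfl
      rw [e, h0]
      exact ⟨fun _ => x_isMin hflat hxy, fun h => absurd Even.zero h⟩
    | succ m ih =>
      intro hj
      have hm := ih (by omega)
      have hc := fence_consec hf (i := m) (by omega)
      obtain ⟨hne, hcc⟩ := compR_ne_comp hc
      by_cases he : Even m
      · have := (min_lt_of_comp hflat (hm.1 he) hne hcc).2
        exact ⟨fun h => absurd ((Nat.even_add_one).1 h) (by simpa using he),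
          fun _ => this⟩
      · have := (max_gt_of_comp hflat (hm.2 he) hne hcc).2
        exact ⟨fun _ => this, fun h => absurd ((Nat.even_add_one).2 he) h⟩
  have := key (d z) (by omega)
  have e : (⟨d z, by omega⟩ : Fin (d z + 1)) = Fin.last (d z) := rfl
  rw [e, hl] at this
  exact this

lemma even_d_iff (hconn : ConnectedPoset α) (hflat : IsFlatPoset α) (hxy : x < y) (z : α) :
    Even (d z) ↔ IsMin z := by
  have h := d_parity hd hflat hxy z
  constructor
  · exact h.1
  · intro hmin
    by_contra he
    exact not_min_and_max hconn hflat z ⟨hmin, h.2 he⟩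

lemma odd_d_iff (hconn : ConnectedPoset α) (hflat : IsFlatPoset α) (hxy : x < y) (z : α) :
    ¬ Even (d z) ↔ IsMax z := by
  have h := d_parity hd hflat hxy z
  constructor
  · exact h.2
  · intro hmax
    by_contra he
    exact not_min_and_max hconn hflat z ⟨h.1 he, hmax⟩

end Flat

section Crown
variable {α : Type*} [PartialOrder α]

lemma comp_symm {u v : α} (h : Comp u v) : Comp v u := ⟨h.1.symm, h.2.symm⟩

lemma exists_other {C : Set α} (hC : IsCrown C) {a b : α} (ha : a ∈ C) (hb : b ∈ C)
    (hab : Comp a b) :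
    ∃ w, (w ∈ C ∧ Comp a w) ∧ w ≠ b ∧ ∀ w', w' ∈ C → Comp a w' → w' ≠ b → w' = w := by
  have h2 := hC.2.1 a ha
  obtain ⟨p, q, hpq, hN⟩ := Set.ncard_eq_two.1 h2
  have hbN : b ∈ {y | y ∈ C ∧ Comp a y} := ⟨hb, hab⟩
  rw [hN] at hbN
  rcases hbN with hbp | hbq
  · refine ⟨q, ?_, ?_, ?_⟩
    · have : q ∈ {y | y ∈ C ∧ Comp a y} := by rw [hN]; exact Or.inr rfl
      exact this
    · rw [hbp]; exact hpq.symm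
    · intro w' hw' hcw' hne
      have : w' ∈ {y | y ∈ C ∧ Comp a y} := ⟨hw', hcw'⟩
      rw [hN] at this
      rcases this with h | h
      · exact absurd (h.trans hbp.symm) hne
      · exact h
  · refine ⟨p, ?_, ?_, ?_⟩
    · have : p ∈ {y | y ∈ C ∧ Comp a y} := by rw [hN]; exact Or.inl rfl
      exact this
    · rw [hbq]; exact hpq
    · intro w' hw' hcw' hne
      have : w' ∈ {y | y ∈ C ∧ Comp a y} := ⟨hw', hcw'⟩
      rw [hN] at this
      rcases this with h | h
      · exact h
      · exact absurd (h.trans hbq.symm) hne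

open Classical in
noncomputable def pick (C : Set α) (prev cur : α) : α :=
  if h : ∃ w, (w ∈ C ∧ Comp cur w) ∧ w ≠ prev ∧
      ∀ w', w' ∈ C → Comp cur w' → w' ≠ prev → w' = w
  then h.choose else cur

lemma pick_spec {C : Set α} (hC : IsCrown C) {prev cur : α} (hp : prev ∈ C) (hc : cur ∈ C)
    (hcomp : Comp cur prev) :
    pick C prev cur ∈ C ∧ Comp cur (pick C prev cur) ∧ pick C prev cur ≠ prev ∧
      ∀ w', w' ∈ C → Comp cur w' → w' = prev ∨ w' = pick C prev cur := by
  have h : ∃ w, (w ∈ C ∧ Comp cur w) ∧ w ≠ prev ∧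
      ∀ w', w' ∈ C → Comp cur w' → w' ≠ prev → w' = w :=
    exists_other hC hc hp hcomp
  rw [pick, dif_pos h]
  obtain ⟨⟨h1, h2⟩, h3, h4⟩ := h.choose_spec
  refine ⟨h1, h2, h3, fun w' hw' hcw' => ?_⟩
  by_cases he : w' = prev
  · exact Or.inl he
  · exact Or.inr (h4 w' hw' hcw' he)

noncomputable def walkseq (C : Set α) (x y : α) : ℕ → α
  | 0 => y
  | 1 => x
  | (k+2) => pick C (walkseq C x y k) (walkseq C x y (k+1))

variable {C : Set α} {x y : α}

lemma walk_inv (hC : IsCrown C) (hx : x ∈ C) (hy : y ∈ C) (hcomp : Comp x y) :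
    ∀ k, walkseq C x y k ∈ C ∧ walkseq C x y (k+1) ∈ C ∧
      Comp (walkseq C x y k) (walkseq C x y (k+1)) := by
  intro k
  induction k with
  | zero => exact ⟨hy, hx, comp_symm hcomp⟩
  | succ m ih =>
    obtain ⟨h1, h2, h3⟩ := ih
    have hs := pick_spec hC h1 h2 (comp_symm h3)
    have e : walkseq C x y (m+2) = pick C (walkseq C x y m) (walkseq C x y (m+1)) := rfl
    exact ⟨h2, by rw [e]; exact hs.1, by rw [e]; exact hs.2.1⟩

lemma walk_ne2 (hC : IsCrown C) (hx : x ∈ C) (hy : y ∈ C) (hcomp : Comp x y) (k : ℕ) :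
    walkseq C x y (k+2) ≠ walkseq C x y k := by
  obtain ⟨h1, h2, h3⟩ := walk_inv hC hx hy hcomp k
  have hs := pick_spec hC h1 h2 (comp_symm h3)
  exact hs.2.2.1

lemma walk_unique (hC : IsCrown C) (hx : x ∈ C) (hy : y ∈ C) (hcomp : Comp x y) (k : ℕ)
    {w' : α} (hw' : w' ∈ C) (hcw' : Comp (walkseq C x y (k+1)) w') :
    w' = walkseq C x y k ∨ w' = walkseq C x y (k+2) := by
  obtain ⟨h1, h2, h3⟩ := walk_inv hC hx hy hcomp k
  have hs := pick_spec hC h1 h2 (comp_symm h3)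
  exact hs.2.2.2 w' hw' hcw'

lemma walk_consec_ne (hC : IsCrown C) (hx : x ∈ C) (hy : y ∈ C) (hcomp : Comp x y) (k : ℕ) :
    walkseq C x y k ≠ walkseq C x y (k+1) :=
  (walk_inv hC hx hy hcomp k).2.2.1

lemma crown_enum [Fintype α] {n : ℕ} (hC : IsCrown C) (hn : C.ncard = n)
    (hx : x ∈ C) (hy : y ∈ C) (hcomp : Comp x y) (hn4 : 4 ≤ n) :
    ∃ c : Fin n → α, Function.Injective c ∧ Set.range c = C ∧
      c ⟨0, by omega⟩ = x ∧ c ⟨n-1, by omega⟩ = y ∧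
      ∀ (i : ℕ) (h : i + 1 < n), Comp (c ⟨i, by omega⟩) (c ⟨i+1, h⟩) := by
  classical
  set g := walkseq C x y with hg
  have hg0 : g 0 = y := rfl
  have hg1 : g 1 = x := rfl
  have inv := walk_inv hC hx hy hcomp
  have ne2 := walk_ne2 hC hx hy hcomp
  have uniq := walk_unique hC hx hy hcomp
  have cne := walk_consec_ne hC hx hy hcomp
  rw [← hg] at inv ne2 uniq cne
  -- pigeonhole: some repetition
  have hQ : ∃ k, ∃ j, j < k ∧ g j = g k := by
    obtain ⟨i, j, hij, he⟩ := Finite.exists_ne_map_eq_of_infinite g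
    rcases hij.lt_or_gt with h | h
    · exact ⟨j, i, h, he⟩
    · exact ⟨i, j, h, he.symm⟩
  obtain ⟨m, ⟨j0, hj0, hgj0⟩, hminm⟩ : ∃ m, (∃ j, j < m ∧ g j = g m) ∧
      ∀ p, p < m → ¬ ∃ q, q < p ∧ g q = g p :=
    ⟨Nat.find hQ, Nat.find_spec hQ, fun p hp => Nat.find_min hQ hp⟩
  have inj_blw : ∀ p q, p < q → q < m → g p ≠ g q := by
    intro p q hpq hqm he
    exact hminm q hqm ⟨p, hpq, he⟩
  have hm3 : 3 ≤ m := by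
    rcases Nat.lt_or_ge m 3 with h | h
    · interval_cases m
      · omega
      · -- m = 1 : j0 = 0, g 0 = g 1
        have : j0 = 0 := by omega
        rw [this] at hgj0
        exact absurd hgj0 (cne 0)
      · -- m = 2 : j0 = 0 or 1
        interval_cases j0
        · exact absurd hgj0 (ne2 0).symm
        · exact absurd hgj0 (cne 1)
    · exact h
  -- first repeat is at index 0
  have hj00 : j0 = 0 := by
    by_contra hne0
    have hj1 : 1 ≤ j0 := by omega
    -- m ≥ j0 + 3
    have hmj : j0 + 3 ≤ m := by
      rcases Nat.lt_or_ge m (j0 + 3) with h | h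
      · have h1 : m = j0 + 1 ∨ m = j0 + 2 := by omega
        rcases h1 with h1 | h1
        · rw [h1] at hgj0; exact absurd hgj0 (cne j0)
        · rw [h1] at hgj0; exact absurd hgj0 (ne2 j0).symm
      · exact h
    -- neighbors of g j0 = g m are g (j0 - 1) and g (j0 + 1); but g (m-1) is also one
    have hc1 : Comp (g j0) (g (m-1)) := by
      have := (inv (m-1)).2.2
      have e : m - 1 + 1 = m := by omega
      rw [e] at this
      rw [← hgj0] at this
      exact comp_symm this
    have e1 : j0 - 1 + 1 = j0 := by omega
    have hu := uniq (j0 - 1) ((inv (m-1)).1) (by rw [e1]; exact hc1)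
    have e2 : j0 - 1 + 2 = j0 + 1 := by omega
    rw [e2] at hu
    rcases hu with h | h
    · exact inj_blw (j0 - 1) (m-1) (by omega) (by omega) h.symm
    · exact inj_blw (j0 + 1) (m-1) (by omega) (by omega) h.symm
  rw [hj00, hg0] at hgj0
  -- hgj0 : y = g m
  -- neighbors of y are exactly x and g (m-1)
  have hmm1 : g (m-1) ≠ x := by
    intro he
    rw [← hg1] at he
    exact inj_blw 1 (m-1) (by omega) (by omega) he.symm
  have hNy : {w | w ∈ C ∧ Comp y w} = {x, g (m-1)} := by
    have hsub : {x, g (m-1)} ⊆ {w | w ∈ C ∧ Comp y w} := by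
      rintro w (rfl | rfl)
      · exact ⟨hx, comp_symm hcomp⟩
      · refine ⟨(inv (m-1)).1, ?_⟩
        have := (inv (m-1)).2.2
        have e : m - 1 + 1 = m := by omega
        rw [e, ← hgj0] at this
        exact comp_symm this
    have hcard : {w | w ∈ C ∧ Comp y w}.ncard ≤ ({x, g (m-1)} : Set α).ncard := by
      rw [hC.2.1 y hy, Set.ncard_pair (Ne.symm hmm1)]
    exact (Set.eq_of_subset_of_ncard_le hsub hcard (Set.toFinite _)).symm
  have nbr0 : ∀ w', w' ∈ C → Comp y w' → w' = x ∨ w' = g (m-1) := by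
    intro w' hw' hcw'
    have : w' ∈ ({x, g (m-1)} : Set α) := by rw [← hNy]; exact ⟨hw', hcw'⟩
    simpa using this
  -- T = image of [0, m)
  set T : Set α := ↑((Finset.range m).image g) with hT
  have hmemT : ∀ a, a ∈ T ↔ ∃ i, i < m ∧ g i = a := by
    intro a
    simp [hT, Finset.mem_image, Finset.mem_range]
  have hTC : T ⊆ C := by
    intro a ha
    obtain ⟨i, _, rfl⟩ := (hmemT a).1 ha
    exact (inv i).1
  have hCT : C ⊆ T := by
    have reach : ∀ c', Relation.ReflTransGen (fun u v : α => u ∈ C ∧ v ∈ C ∧ Comp u v) y c' →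
        c' ∈ T := by
      intro c' hchain
      induction hchain with
      | refl => exact (hmemT y).2 ⟨0, by omega, hg0⟩
      | @tail b c'' h1 h2 ih =>
        obtain ⟨hbC, hcC, hcomp'⟩ := h2
        obtain ⟨i, him, hgi⟩ := (hmemT b).1 ih
        rcases Nat.eq_zero_or_pos i with hi0 | hip
        · -- b = y
          rw [hi0, hg0] at hgi
          rcases nbr0 c'' hcC (hgi ▸ hcomp') with h | h
          · exact (hmemT c'').2 ⟨1, by omega, by rw [hg1, h]⟩
          · exact (hmemT c'').2 ⟨m-1, by omega, h.symm⟩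
        · have e1 : i - 1 + 1 = i := by omega
          have hu := uniq (i-1) hcC (by rw [e1, hgi]; exact hcomp')
          have e2 : i - 1 + 2 = i + 1 := by omega
          rw [e2] at hu
          rcases hu with h | h
          · exact (hmemT c'').2 ⟨i-1, by omega, h.symm⟩
          · rcases Nat.lt_or_ge (i+1) m with him2 | him2
            · exact (hmemT c'').2 ⟨i+1, him2, h.symm⟩
            · have hie : i + 1 = m := by omega
              rw [hie, ← hgj0] at h
              exact (hmemT c'').2 ⟨0, by omega, by rw [hg0, h]⟩
    intro c0 hc0
    exact reach c0 (hC.2.2 y hy c0 hc0)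
  have hTeq : T = C := le_antisymm hTC hCT
  have hTcard : T.ncard = m := by
    rw [hT, Set.ncard_coe_finset, Finset.card_image_of_injOn, Finset.card_range]
    intro p hp q hq hpq
    simp only [Finset.mem_coe, Finset.mem_range] at hp hq
    by_contra hne
    rcases Ne.lt_or_gt hne with h | h
    · exact inj_blw p q h hq hpq
    · exact inj_blw q p h hp hpq.symm
  have hnm : n = m := by rw [← hn, ← hTeq, hTcard]
  subst hnm
  -- final enumeration
  refine ⟨fun i : Fin n => g ((i:ℕ) + 1), ?_, ?_, ?_, ?_, ?_⟩
  · intro p q hpq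
    simp only at hpq
    have hp := p.isLt; have hq := q.isLt
    by_contra hne
    have hne' : (p:ℕ) ≠ (q:ℕ) := fun h => hne (Fin.ext h)
    rcases hne'.lt_or_gt with h | h
    · rcases Nat.lt_or_ge ((q:ℕ)+1) n with h2 | h2
      · exact inj_blw ((p:ℕ)+1) ((q:ℕ)+1) (by omega) h2 hpq
      · have e : (q:ℕ)+1 = n := by omega
        rw [e, ← hgj0] at hpq
        exact inj_blw 0 ((p:ℕ)+1) (by omega) (by omega) hpq.symm
    · rcases Nat.lt_or_ge ((p:ℕ)+1) n with h2 | h2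
      · exact inj_blw ((q:ℕ)+1) ((p:ℕ)+1) (by omega) h2 hpq.symm
      · have e : (p:ℕ)+1 = n := by omega
        rw [e, ← hgj0] at hpq
        exact inj_blw 0 ((q:ℕ)+1) (by omega) (by omega) hpq
  · apply le_antisymm
    · rintro a ⟨i, rfl⟩
      exact (inv ((i:ℕ)+1)).1
    · intro c0 hc0
      obtain ⟨i, him, hgi⟩ := (hmemT c0).1 (hCT hc0)
      rcases Nat.eq_zero_or_pos i with hi0 | hip
      · refine ⟨⟨n-1, by omega⟩, ?_⟩
        simp only
        have e : n - 1 + 1 = n := by omega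
        rw [e, ← hgj0, ← hg0, ← hi0]
        exact hgi
      · refine ⟨⟨i-1, by omega⟩, ?_⟩
        simp only
        have e : i - 1 + 1 = i := by omega
        rw [e]
        exact hgi
  · exact hg1
  · have e : n - 1 + 1 = n := by omega
    simp only
    rw [e]
    exact hgj0.symm
  · intro i h
    exact (inv (i+1)).2.2

end Crown

section FenceCrown
variable {α : Type*} [PartialOrder α]

/-- a fence of `P⁻` from `x` to `y` of length `m ≥ 3` together with the edge
`x < y` forms a crown with `m+1` elements -/
lemma fence_crown {x y : α} (hxy : x < y) {m : ℕ} {f : Fin (m+1) → α}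
    (hf : IsFenceSeq (Rminus x y) m f) (h0 : f 0 = x) (hl : f (Fin.last m) = y)
    (hm : 3 ≤ m) : IsCrown (Set.range f) ∧ (Set.range f).ncard = m + 1 := by
  have hinj := hf.1
  have hcard : (Set.range f).ncard = m + 1 := by
    rw [← Nat.card_coe_set_eq, Nat.card_range_of_injective hinj]
    simp
  have hedge : ∀ (i : ℕ) (h : i < m), Comp (f ⟨i, by omega⟩) (f ⟨i+1, by omega⟩) := by
    intro i h
    obtain ⟨hne, hc⟩ := compR_ne_comp (fence_consec hf h)
    exact ⟨hne, hc⟩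
  have hxyedge : Comp x y := ⟨ne_of_lt hxy, Or.inl hxy.le⟩
  have hpos : ∀ (j : ℕ) (hj : j < m + 1), f ⟨j, hj⟩ = x → j = 0 := by
    intro j hj he
    have : (⟨j, hj⟩ : Fin (m+1)) = 0 := hinj (by rw [he, h0])
    simpa using congrArg Fin.val this
  have hposy : ∀ (j : ℕ) (hj : j < m + 1), f ⟨j, hj⟩ = y → j = m := by
    intro j hj he
    have : (⟨j, hj⟩ : Fin (m+1)) = Fin.last m := hinj (by rw [he, hl])
    simpa [Fin.last] using congrArg Fin.val this
  have hinj' : ∀ (i j : ℕ) (hi : i < m + 1) (hj : j < m + 1),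
      f ⟨i, hi⟩ = f ⟨j, hj⟩ → i = j := by
    intro i j hi hj he
    simpa using congrArg Fin.val (hinj he)
  have hnonedge : ∀ (i j : ℕ) (hi : i < m + 1) (hj : j < m + 1), i + 1 < j →
      ¬ (i = 0 ∧ j = m) → ¬ Comp (f ⟨i, hi⟩) (f ⟨j, hj⟩) := by
    intro i j hi hj hij hnot hcomp
    have hchord := fence_chord hf hij hj
    apply hchord
    obtain ⟨hne, hle | hle⟩ := hcomp
    · refine ⟨hne, Or.inl ⟨hle, ?_⟩⟩
      rintro ⟨he1, he2⟩
      exact hnot ⟨hpos i hi he1, hposy j hj he2⟩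
    · refine ⟨hne, Or.inr ⟨hle, ?_⟩⟩
      rintro ⟨he1, he2⟩
      have := hpos j hj he1
      omega
  have h00 : f ⟨0, by omega⟩ = x := h0
  have hll : f ⟨m, by omega⟩ = y := hl
  refine ⟨⟨?_, ?_, ?_⟩, hcard⟩
  · omega
  · -- degree two
    rintro a ⟨⟨iv, hi⟩, rfl⟩
    by_cases h0i : iv = 0
    · -- a = x ; neighbors f 1 and y
      subst h0i
      have hset : {w | w ∈ Set.range f ∧ Comp (f ⟨0, hi⟩) w} = {f ⟨1, by omega⟩, y} := by
        ext w
        simp only [Set.mem_setOf_eq, Set.mem_insert_iff, Set.mem_singleton_iff]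
        constructor
        · rintro ⟨⟨⟨jv, hj⟩, rfl⟩, hcomp⟩
          rcases Nat.lt_or_ge jv 2 with h2 | h2
          · have : jv = 0 ∨ jv = 1 := by omega
            rcases this with h | h
            · exact absurd (congrArg f (Fin.ext (by omega : (0:ℕ) = jv))) hcomp.1
            · left; exact congrArg f (Fin.ext h)
          · by_cases hjm : jv = m
            · right; subst hjm; exact hll
            · exact absurd hcomp (hnonedge 0 jv hi hj (by omega) (by omega))
        · rintro (rfl | hw)
          · exact ⟨⟨⟨1, by omega⟩, rfl⟩, hedge 0 (by omega)⟩
          · subst hw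
            refine ⟨⟨⟨m, by omega⟩, hll⟩, ?_⟩
            rw [h00]
            exact hxyedge
      rw [hset, Set.ncard_pair]
      intro he
      have := hposy 1 (by omega) he
      omega
    · by_cases hmi : iv = m
      · -- a = y ; neighbors f (m-1) and x
        have ea : (⟨iv, hi⟩ : Fin (m+1)) = ⟨m, by omega⟩ := Fin.ext hmi
        rw [ea]
        have hset : {w | w ∈ Set.range f ∧ Comp (f ⟨m, by omega⟩) w} = {f ⟨m-1, by omega⟩, x} := by
          ext w
          simp only [Set.mem_setOf_eq, Set.mem_insert_iff, Set.mem_singleton_iff]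
          constructor
          · rintro ⟨⟨⟨jv, hj⟩, rfl⟩, hcomp⟩
            rcases Nat.lt_or_ge jv (m-1) with h2 | h2
            · by_cases hj0 : jv = 0
              · right; subst hj0; exact h00
              · exact absurd (comp_symm hcomp)
                  (hnonedge jv m hj (by omega) (by omega) (by omega))
            · have : jv = m - 1 ∨ jv = m := by omega
              rcases this with h | h
              · left; exact congrArg f (Fin.ext h)
              · exact absurd (congrArg f (Fin.ext (by omega : m = jv))) hcomp.1
          · rintro (rfl | hw)
            · refine ⟨⟨⟨m-1, by omega⟩, rfl⟩, ?_⟩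
              have := hedge (m-1) (by omega)
              have e2 : f ⟨m-1+1, by omega⟩ = f ⟨m, by omega⟩ :=
                congrArg f (Fin.ext (by show m-1+1 = m; omega))
              rw [e2] at this
              exact comp_symm this
            · subst hw
              refine ⟨⟨⟨0, by omega⟩, h00⟩, ?_⟩
              rw [hll]
              exact comp_symm hxyedge
        rw [hset, Set.ncard_pair]
        intro he
        have := hpos (m-1) (by omega) he
        omega
      · -- interior: neighbors f (iv-1) and f (iv+1)
        have hset : {w | w ∈ Set.range f ∧ Comp (f ⟨iv, hi⟩) w} =
            {f ⟨iv-1, by omega⟩, f ⟨iv+1, by omega⟩} := by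
          ext w
          simp only [Set.mem_setOf_eq, Set.mem_insert_iff, Set.mem_singleton_iff]
          constructor
          · rintro ⟨⟨⟨jv, hj⟩, rfl⟩, hcomp⟩
            rcases Nat.lt_or_ge (jv+1) iv with h2 | h2
            · exact absurd (comp_symm hcomp)
                (hnonedge jv iv hj hi h2 (by omega))
            · rcases Nat.lt_or_ge iv (jv+1) with h3 | h3
              · rcases Nat.lt_or_ge (iv+1) jv with h4 | h4
                · exact absurd hcomp (hnonedge iv jv hi hj h4 (by omega))
                · have : jv = iv ∨ jv = iv+1 := by omega
                  rcases this with h | h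
                  · exact absurd (congrArg f (Fin.ext (by omega : iv = jv))) hcomp.1
                  · right; exact congrArg f (Fin.ext h)
              · left; exact congrArg f (Fin.ext (by show jv = iv - 1; omega))
          · rintro (rfl | hw)
            · refine ⟨⟨⟨iv-1, by omega⟩, rfl⟩, ?_⟩
              have := hedge (iv-1) (by omega)
              have e2 : f ⟨iv-1+1, by omega⟩ = f ⟨iv, hi⟩ :=
                congrArg f (Fin.ext (by show iv-1+1 = iv; omega))
              rw [e2] at this
              exact comp_symm this
            · subst hw
              exact ⟨⟨⟨iv+1, by omega⟩, rfl⟩, hedge iv (by omega)⟩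
        rw [hset, Set.ncard_pair]
        intro he
        have := hinj' _ _ _ _ he
        omega
  · -- connectivity
    have hstep : Symmetric (fun u v : α => u ∈ Set.range f ∧ v ∈ Set.range f ∧ Comp u v) :=
      fun u v ⟨h1, h2, h3⟩ => ⟨h2, h1, comp_symm h3⟩
    have reach : ∀ (j : ℕ) (hj : j < m + 1), Relation.ReflTransGen
        (fun u v : α => u ∈ Set.range f ∧ v ∈ Set.range f ∧ Comp u v) (f ⟨0, by omega⟩)
        (f ⟨j, hj⟩) := by
      intro j
      induction j with
      | zero => intro hj; exact Relation.ReflTransGen.refl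
      | succ p ih =>
        intro hj
        refine Relation.ReflTransGen.tail (ih (by omega)) ?_
        exact ⟨⟨_, rfl⟩, ⟨_, rfl⟩, hedge p (by omega)⟩
    rintro a ⟨⟨iv, hi⟩, rfl⟩ b ⟨⟨jv, hj⟩, rfl⟩
    exact Relation.ReflTransGen.trans
      ((@Relation.ReflTransGen.stdSymm _ _ ⟨fun _ _ h => hstep h⟩).symm _ _ (reach iv hi)) (reach jv hj)

end FenceCrown


/-- Rival's retraction lemma: with `C` an `n`-crown of minimal
size among crowns containing `x < y`, `d z` the least length of a fence of
`P⁻` containing `x` and `z`, the map sending `z` to the unique `c ∈ C` with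
`d c = d z` when `d z ≤ n` and to `y` otherwise is a retraction onto `C`. -/
theorem stmt12 {α : Type*} [PartialOrder α] [Fintype α]
    (hconn : ConnectedPoset α) (hflat : IsFlatPoset α)
    (C : Set α) (n : ℕ) (hC : IsCrown C) (hn : C.ncard = n)
    (x y : α) (hx : x ∈ C) (hy : y ∈ C) (hxy : x < y)
    (hmin : ∀ C' : Set α, IsCrown C' → x ∈ C' → y ∈ C' → n ≤ C'.ncard)
    (d : α → ℕ)
    (hd : ∀ z : α, IsLeast {k : ℕ | ∃ f : Fin (k + 1) → α,
      IsFenceSeq (Rminus x y) k f ∧ x ∈ Set.range f ∧ z ∈ Set.range f} (d z))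
    (r : α → α)
    (hr1 : ∀ z : α, d z ≤ n → r z ∈ C ∧ d (r z) = d z)
    (hr2 : ∀ z : α, n < d z → r z = y) :
    (∀ z : α, d z ≤ n → ∃! c : α, c ∈ C ∧ d c = d z) ∧
    Monotone r ∧ (∀ z, r (r z) = r z) ∧ Set.range r = C := by
  classical
  have hn4 : 4 ≤ n := by have := hC.1; omega
  have hcompxy : Comp x y := ⟨ne_of_lt hxy, Or.inl hxy.le⟩
  obtain ⟨c, hcinj, hcrange, hc0, hclast, hccons⟩ := crown_enum hC hn hx hy hcompxy hn4
  have hcmem : ∀ (i : ℕ) (h : i < n), c ⟨i, h⟩ ∈ C := by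
    intro i h; rw [← hcrange]; exact ⟨⟨i, h⟩, rfl⟩
  have hcx : ∀ (j : ℕ) (hj : j < n), c ⟨j, hj⟩ = x → j = 0 := by
    intro j hj he
    have h2 : c ⟨j, hj⟩ = c ⟨0, by omega⟩ := by rw [he, hc0]
    simpa using congrArg Fin.val (hcinj h2)
  have hcy : ∀ (j : ℕ) (hj : j < n), c ⟨j, hj⟩ = y → j = n - 1 := by
    intro j hj he
    have h2 : c ⟨j, hj⟩ = c ⟨n-1, by omega⟩ := by rw [he, hclast]
    simpa using congrArg Fin.val (hcinj h2)
  have ccompR : ∀ (i : ℕ) (h1 : i < n) (h2 : i + 1 < n),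
      CompR (Rminus x y) (c ⟨i, h1⟩) (c ⟨i+1, h2⟩) := by
    intro i h1 h2
    obtain ⟨hne, hle | hle⟩ := hccons i h2
    · refine ⟨hne, Or.inl ⟨hle, ?_⟩⟩
      rintro ⟨he1, he2⟩
      have e1 := hcx i h1 he1
      have e2 := hcy (i+1) h2 he2
      omega
    · refine ⟨hne, Or.inr ⟨hle, ?_⟩⟩
      rintro ⟨he1, he2⟩
      have e1 := hcx (i+1) h2 he1
      omega
  have dle : ∀ (i : ℕ) (h : i < n), d (c ⟨i, h⟩) ≤ i := by
    intro i
    induction i with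
    | zero =>
      intro h
      have e : c ⟨0, h⟩ = x := hc0
      rw [e, d_self hd]
    | succ i ih =>
      intro h
      have hlo : i < n := by omega
      have hstep := d_step hd (ccompR i hlo h)
      have hih := ih hlo
      omega
  have dyge : n - 1 ≤ d y := by
    by_contra hlt
    push_neg at hlt
    obtain ⟨f, hf, h0, hl⟩ := exists_realizer hd y
    have hm0 : d y ≠ 0 := fun h => (ne_of_lt hxy) (d_eq_zero hd h).symm
    have hm1 : d y ≠ 1 := by
      intro h1
      have hcc := fence_consec hf (i := 0) (by omega)
      have e0 : f ⟨0, by omega⟩ = x := h0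
      have e1 : f ⟨0+1, by omega⟩ = y := by
        have e : (⟨0+1, by omega⟩ : Fin (d y + 1)) = Fin.last (d y) :=
          Fin.ext (by simp [Fin.last]; omega)
        rw [e, hl]
      rw [e0, e1] at hcc
      obtain ⟨hne, hc1 | hc1⟩ := hcc
      · exact hc1.2 ⟨rfl, rfl⟩
      · exact absurd hc1.1 (not_le_of_gt hxy)
    have hm2 : d y ≠ 2 := by
      intro h2
      have hcc1 := fence_consec hf (i := 0) (by omega)
      have hcc2 := fence_consec hf (i := 1) (by omega)
      have e0 : f ⟨0, by omega⟩ = x := h0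
      have e2 : f ⟨1+1, by omega⟩ = y := by
        have e : (⟨1+1, by omega⟩ : Fin (d y + 1)) = Fin.last (d y) :=
          Fin.ext (by simp [Fin.last]; omega)
        rw [e, hl]
      rw [e0] at hcc1
      rw [e2] at hcc2
      have hxmin := x_isMin hflat hxy
      obtain ⟨hne1, hcp1⟩ := compR_ne_comp hcc1
      have hwmax : IsMax (f ⟨0+1, by omega⟩) := (min_lt_of_comp hflat hxmin hne1 hcp1).2
      obtain ⟨hne2, hcp2⟩ := compR_ne_comp hcc2
      have hwmax' : IsMax (f ⟨1, by omega⟩) := hwmax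
      have hymin : IsMin y := (max_gt_of_comp hflat hwmax' hne2 hcp2).2
      exact not_min_and_max hconn hflat y ⟨hymin, y_isMax hflat hxy⟩
    have hm3 : 3 ≤ d y := by omega
    obtain ⟨hcrown, hcard⟩ := fence_crown hxy hf h0 hl hm3
    have := hmin _ hcrown ⟨0, h0⟩ ⟨Fin.last _, hl⟩
    rw [hcard] at this
    omega
  have dyle : d y ≤ n - 1 := by
    have hdle := dle (n-1) (by omega)
    rw [hclast] at hdle
    exact hdle
  have chain : ∀ (k i : ℕ) (h1 : i < n) (h : i + k < n),
      d (c ⟨i + k, h⟩) ≤ d (c ⟨i, h1⟩) + k := by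
    intro k
    induction k with
    | zero =>
      intro i h1 h
      have e : c ⟨i + 0, h⟩ = c ⟨i, h1⟩ := congrArg c (Fin.ext (show i + 0 = i by omega))
      rw [e]
      omega
    | succ k ih =>
      intro i h1 h
      have h1' : i + 1 < n := by omega
      have h'' : i + 1 + k < n := by omega
      have hih := ih (i+1) h1' h''
      have hstep := d_step hd (ccompR i h1 h1')
      have e : c ⟨i + (k+1), h⟩ = c ⟨i + 1 + k, h''⟩ := congrArg c (Fin.ext (show i + (k+1) = i + 1 + k by omega))
      rw [e]
      omega
  have dge : ∀ (i : ℕ) (h : i < n), i ≤ d (c ⟨i, h⟩) := by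
    intro i h
    have hsum : i + (n-1-i) < n := by omega
    have hstep := chain (n-1-i) i h hsum
    have e : c ⟨i + (n-1-i), hsum⟩ = y := by
      rw [← hclast]
      exact congrArg c (Fin.ext (show i + (n-1-i) = n-1 by omega))
    rw [e] at hstep
    omega
  have dci : ∀ (i : ℕ) (h : i < n), d (c ⟨i, h⟩) = i :=
    fun i h => le_antisymm (dle i h) (dge i h)
  have dCuniq : ∀ w1 w2, w1 ∈ C → w2 ∈ C → d w1 = d w2 → w1 = w2 := by
    intro w1 w2 h1 h2 he
    rw [← hcrange] at h1 h2
    obtain ⟨⟨i, hi⟩, rfl⟩ := h1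
    obtain ⟨⟨j, hj⟩, rfl⟩ := h2
    rw [dci i hi, dci j hj] at he
    exact congrArg c (Fin.ext he)
  have dC_lt : ∀ w ∈ C, d w < n := by
    intro w hw
    rw [← hcrange] at hw
    obtain ⟨⟨i, hi⟩, rfl⟩ := hw
    rw [dci i hi]
    exact hi
  have d_ne_n : ∀ z, d z ≠ n := by
    intro z he
    have h1 := hr1 z (le_of_eq he)
    have h2 := dC_lt _ h1.1
    omega
  have r_mem : ∀ z, r z ∈ C := by
    intro z
    rcases le_or_gt (d z) n with h | h
    · exact (hr1 z h).1
    · rw [hr2 z h]; exact hy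
  have r_fix : ∀ w ∈ C, r w = w := by
    intro w hw
    obtain ⟨h1, h2⟩ := hr1 w (le_of_lt (dC_lt w hw))
    exact dCuniq _ _ h1 hw h2
  refine ⟨?_, ?_, ?_, ?_⟩
  · intro z hz
    obtain ⟨h1, h2⟩ := hr1 z hz
    exact ⟨r z, ⟨h1, h2⟩, fun w ⟨hw1, hw2⟩ => dCuniq w (r z) hw1 h1 (hw2.trans h2.symm)⟩
  · -- monotone
    intro u v huv
    rcases eq_or_lt_of_le huv with he | hlt
    · rw [he]
    have humin : IsMin u := by
      rcases hflat.1 u with h | h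
      · exact h
      · exact absurd (le_antisymm hlt.le (h hlt.le)) (ne_of_lt hlt)
    have hvmax : IsMax v := (min_lt_of_comp hflat humin (ne_of_lt hlt) (Or.inl hlt.le)).2
    by_cases hcase : u = x ∧ v = y
    · rw [hcase.1, hcase.2, r_fix x hx, r_fix y hy]
      exact hxy.le
    have hcr : CompR (Rminus x y) u v := ⟨ne_of_lt hlt, Or.inl ⟨hlt.le, hcase⟩⟩
    have h1 := d_step hd hcr
    have h2 := d_step hd (compR_symm hcr)
    have hue : Even (d u) := (even_d_iff hd hconn hflat hxy u).2 humin
    have hvo : ¬ Even (d v) := (odd_d_iff hd hconn hflat hxy v).2 hvmax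
    have hnedv : d u ≠ d v := fun h => hvo (h ▸ hue)
    rcases le_or_gt (d u) n with hun | hun <;> rcases le_or_gt (d v) n with hvn | hvn
    · -- both ≤ n
      obtain ⟨hru, hdu⟩ := hr1 u hun
      obtain ⟨hrv, hdv⟩ := hr1 v hvn
      have hdun : d u < n := lt_of_le_of_ne hun (d_ne_n u)
      have hdvn : d v < n := lt_of_le_of_ne hvn (d_ne_n v)
      have hru_eq : r u = c ⟨d u, hdun⟩ :=
        dCuniq _ _ hru (hcmem _ _) (by rw [hdu, dci])
      have hrv_eq : r v = c ⟨d v, hdvn⟩ :=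
        dCuniq _ _ hrv (hcmem _ _) (by rw [hdv, dci])
      rcases (show d v = d u + 1 ∨ d u = d v + 1 by omega) with hc' | hc'
      · have hdup : d u + 1 < n := by omega
        have hcomp' := hccons (d u) hdup
        have hmin' : IsMin (c ⟨d u, by omega⟩) :=
          (even_d_iff hd hconn hflat hxy _).1 (by rw [dci]; exact hue)
        have hle2 : c ⟨d u, by omega⟩ ≤ c ⟨d u + 1, hdup⟩ :=
          (min_lt_of_comp hflat hmin' hcomp'.1 hcomp'.2).1.le
        have e2 : r v = c ⟨d u + 1, hdup⟩ :=
          hrv_eq.trans (congrArg c (Fin.ext hc'))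
        rw [hru_eq, e2]
        exact hle2
      · have hdvp : d v + 1 < n := by omega
        have hcomp' := hccons (d v) hdvp
        have hmin' : IsMin (c ⟨d v + 1, hdvp⟩) := by
          refine (even_d_iff hd hconn hflat hxy _).1 ?_
          rw [dci, ← hc']
          exact hue
        have hle2 : c ⟨d v + 1, hdvp⟩ ≤ c ⟨d v, by omega⟩ :=
          (min_lt_of_comp hflat hmin' (comp_symm hcomp').1 (comp_symm hcomp').2).1.le
        have e1 : r u = c ⟨d v + 1, hdvp⟩ :=
          hru_eq.trans (congrArg c (Fin.ext hc'))
        rw [e1, hrv_eq]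
        exact hle2
    · exact absurd (by omega : d u = n) (d_ne_n u)
    · exact absurd (by omega : d v = n) (d_ne_n v)
    · rw [hr2 u hun, hr2 v hvn]
  · intro z
    exact r_fix _ (r_mem z)
  · ext w
    constructor
    · rintro ⟨z, rfl⟩
      exact r_mem z
    · intro hw
      exact ⟨w, r_fix w hw⟩
end
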